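/- Let z₁, z₂, z₃, z₄ and z₁′, z₂′, z₃′, z₄′ be two quadruples of nonzero null vectors in ℂ^{3,1}, each quadruple having no two members that are complex multiples of one another. Set 𝕏₁ = 𝕏(z₁,z₂,z₃,z₄), 𝕏₂ = 𝕏(z₁,z₃,z₂,z₄), 𝕏₃ = 𝕏(z₂,z₃,z₁,z₄), and define 𝕏₁′, 𝕏₂′, 𝕏₃′ analogously from the primed quadruple. Assume 𝕏₁, 𝕏₂, 𝕏₃ are all non-real and 𝕏_i′ = 𝕏_i for i = 1, 2, 3. Then there exist A ∈ SU(3,1) and nonzero complex numbers λ₁, λ₂, λ₃, λ₄ such that A·z_j = λ_j·z_j′ for j = 1, 2, 3, 4. -/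

import Mathlib

open Complex ComplexConjugate Matrix Polynomial

noncomputable section

abbrev Vec4 := Fin 4 → ℂ
abbrev Mat4 := Matrix (Fin 4) (Fin 4) ℂ

/-- The Hermitian form of signature (3,1):
`⟨z,w⟩ = z₁·conj(w₄) + z₂·conj(w₂) + z₃·conj(w₃) + z₄·conj(w₁)`. -/
def hermForm (z w : Vec4) : ℂ :=
  z 0 * conj (w 3) + z 1 * conj (w 1) + z 2 * conj (w 2) + z 3 * conj (w 0)

/-- The matrix of the Hermitian form. -/
def Hmat : Mat4 := !![0,0,0,1; 0,1,0,0; 0,0,1,0; 1,0,0,0]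

/-- `A ∈ SU(3,1)`: `(conj A)ᵀ H A = H` and `det A = 1`. -/
def isSU31 (A : Mat4) : Prop := Aᴴ * Hmat * A = Hmat ∧ A.det = 1

/-- Koranyi-Riemann cross-ratio. -/
def crossRatio (z1 z2 z3 z4 : Vec4) : ℂ :=
  (hermForm z3 z1 * hermForm z4 z2) / (hermForm z4 z1 * hermForm z3 z2)

/-- No two of the four vectors are complex multiples of one another. -/
def PairwiseNotProp4 (z1 z2 z3 z4 : Vec4) : Prop :=
  (∀ c : ℂ, z1 ≠ c • z2) ∧ (∀ c : ℂ, z1 ≠ c • z3) ∧ (∀ c : ℂ, z1 ≠ c • z4) ∧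
  (∀ c : ℂ, z2 ≠ c • z3) ∧ (∀ c : ℂ, z2 ≠ c • z4) ∧ (∀ c : ℂ, z3 ≠ c • z4)

/-- `u` is a nonzero complex multiple of `v`. -/
def PropNZ (u v : Vec4) : Prop := ∃ c : ℂ, c ≠ 0 ∧ u = c • v

/-- A loxodromic element of SU(3,1), equipped with its eigen-data. -/
structure Lox where
  M : Mat4
  hM : isSU31 M
  r : ℝ
  θ : ℝ
  φ : ℝ
  hr : 1 < r
  a : Vec4
  x : Vec4
  y : Vec4
  rp : Vec4
  hbasis : LinearIndependent ℂ ![a, x, y, rp]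
  ha : M.mulVec a = ((r : ℂ) * Complex.exp ((θ : ℂ) * Complex.I)) • a
  hx : M.mulVec x = Complex.exp ((φ : ℂ) * Complex.I) • x
  hy : M.mulVec y = Complex.exp (-(2*(θ : ℂ)+(φ : ℂ)) * Complex.I) • y
  hrp : M.mulVec rp = ((r : ℂ)⁻¹ * Complex.exp ((θ : ℂ) * Complex.I)) • rp
  hnull_a : hermForm a a = 0
  hnull_r : hermForm rp rp = 0
  hx1 : hermForm x x = 1
  hy1 : hermForm y y = 1

/-- Goldman's eta invariant `η(a,r;x)` for null `a`, `r` and positive `x`. -/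
def etaV (aA rA xB : Vec4) : ℂ :=
  (hermForm aA xB * hermForm xB rA) / (hermForm aA rA * hermForm xB xB)

def eta1 (A B : Lox) : ℂ := etaV A.a A.rp B.x
def eta2 (A B : Lox) : ℂ := etaV A.a A.rp B.y
def nu1 (A B : Lox) : ℂ := etaV B.a B.rp A.x
def nu2 (A B : Lox) : ℂ := etaV B.a B.rp A.y

def X1 (A B : Lox) : ℂ := crossRatio B.a A.a A.rp B.rp
def X2 (A B : Lox) : ℂ := crossRatio B.a A.rp A.a B.rp
def X3 (A B : Lox) : ℂ := crossRatio A.a A.rp B.a B.rp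

def alpha1 (A B : Lox) : ℂ := crossRatio A.rp A.a B.x B.a
def alpha2 (A B : Lox) : ℂ := crossRatio A.rp A.a B.y B.a
def beta1 (A B : Lox) : ℂ := crossRatio B.rp B.a A.x A.a
def beta2 (A B : Lox) : ℂ := crossRatio B.rp B.a A.y A.a

def etaIdx (i : Fin 2) (A B : Lox) : ℂ := if i = 0 then eta1 A B else eta2 A B
def nuIdx (j : Fin 2) (A B : Lox) : ℂ := if j = 0 then nu1 A B else nu2 A B
def alphaIdx (i : Fin 2) (A B : Lox) : ℂ := if i = 0 then alpha1 A B else alpha2 A B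
def betaIdx (j : Fin 2) (A B : Lox) : ℂ := if j = 0 then beta1 A B else beta2 A B

/-- Non-singularity of the eigen-data of a pair of loxodromic elements. -/
def NonSingularV (aA xA yA rA aB xB yB rB : Vec4) : Prop :=
  PairwiseNotProp4 aA rA aB rB ∧
  LinearIndependent ℂ ![aA, rA, aB, rB] ∧
  (etaV aA rA xB ≠ 0 ∨ etaV aA rA yB ≠ 0) ∧
  (etaV aB rB xA ≠ 0 ∨ etaV aB rB yA ≠ 0)

/-- The pair `(A,B)` of loxodromic elements is non-singular. -/
def NonSingular (A B : Lox) : Prop :=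
  NonSingularV A.a A.x A.y A.rp B.a B.x B.y B.rp

/-- trace. -/
def tau (A : Mat4) : ℂ := A.trace

/-- `σ_A = (tr(A)² − tr(A²))/2`. -/
def sigma (A : Mat4) : ℂ := ((A.trace)^2 - (A^2).trace)/2

/-- Cartan's angular invariant. -/
def cartan (z1 z2 z3 : Vec4) : ℝ :=
  Complex.arg (-(hermForm z1 z2 * hermForm z2 z3 * hermForm z3 z1))

/-- The diagonal matrix `E(κ,ψ)`. -/
def Emat (κ : ℂ) (ψ : ℝ) : Mat4 :=
  Matrix.diagonal
    ![Complex.exp κ,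
      Complex.exp (-((ψ : ℂ) * Complex.I) + (conj κ - κ)/2),
      Complex.exp ((ψ : ℂ) * Complex.I + (conj κ - κ)/2),
      Complex.exp (-(conj κ))]

/-- Anti-holomorphic isometric involution `z ↦ M·conj(z)` of `ℂ^{3,1}`. -/
def AntiHolInv (M : Mat4) : Prop :=
  M * (M.map (starRingEnd ℂ)) = 1 ∧
  ∀ z w : Vec4, hermForm (M.mulVec (star z)) (M.mulVec (star w)) = conj (hermForm z w)


section CR8Helpers

lemma herm_conj (z w : Vec4) : hermForm w z = conj (hermForm z w) := by
  simp [hermForm]; ring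

lemma herm_zero_left (r : Vec4) : hermForm 0 r = 0 := by
  simp [hermForm]

lemma herm_smul_smul (a b : ℂ) (x y : Vec4) :
    hermForm (a • x) (b • y) = a * conj b * hermForm x y := by
  simp [hermForm]; ring

lemma herm_smul_left' (a : ℂ) (x y : Vec4) : hermForm (a • x) y = a * hermForm x y := by
  have := herm_smul_smul a 1 x y; simpa using this

lemma herm_comb2_left (a b : ℂ) (x y r : Vec4) :
    hermForm (a • x + b • y) r = a * hermForm x r + b * hermForm y r := by
  simp [hermForm]; ring

lemma herm_sub2_left (a b : ℂ) (x y z r : Vec4) :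
    hermForm (x - a • y - b • z) r = hermForm x r - a * hermForm y r - b * hermForm z r := by
  simp [hermForm]; ring

lemma herm_sub2_right (a b : ℂ) (x y z r : Vec4) :
    hermForm r (x - a • y - b • z)
      = hermForm r x - conj a * hermForm r y - conj b * hermForm r z := by
  simp [hermForm]; ring

lemma herm_comb4_left (a b c d : ℂ) (x y z w r : Vec4) :
    hermForm (a • x + b • y + c • z + d • w) r
      = a * hermForm x r + b * hermForm y r + c * hermForm z r + d * hermForm w r := by
  simp [hermForm]; ring

lemma herm_comb4_right (a b c d : ℂ) (x y z w r : Vec4) :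
    hermForm r (a • x + b • y + c • z + d • w)
      = conj a * hermForm r x + conj b * hermForm r y + conj c * hermForm r z
        + conj d * hermForm r w := by
  simp [hermForm]; ring

lemma herm_self_re (z : Vec4) : hermForm z z = ((hermForm z z).re : ℂ) := by
  have h := herm_conj z z
  exact (Complex.conj_eq_iff_re.mp h.symm).symm

lemma lemC1 (v p : Vec4) (hv3 : v 3 = 1) (h1 : hermForm v v = 0) (h2 : hermForm p v = 0) :
    0 ≤ (hermForm p p).re ∧ ((hermForm p p).re = 0 → ∃ c : ℂ, p = c • v) := by
  have h1' : v 0 + v 1 * conj (v 1) + v 2 * conj (v 2) + conj (v 0) = 0 := by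
    have := h1; simp only [hermForm, hv3, _root_.map_one, mul_one, one_mul] at this
    linear_combination this
  have h2' : p 0 + p 1 * conj (v 1) + p 2 * conj (v 2) + p 3 * conj (v 0) = 0 := by
    have := h2; simp only [hermForm, hv3, _root_.map_one, mul_one] at this
    linear_combination this
  have h2c : conj (p 0) + conj (p 1) * v 1 + conj (p 2) * v 2 + conj (p 3) * v 0 = 0 := by
    have := congrArg (starRingEnd ℂ) h2'
    simp only [_root_.map_add, _root_.map_mul, _root_.map_zero, Complex.conj_conj] at this
    linear_combination this
  have key : hermForm p p
      = (p 1 - p 3 * v 1) * conj (p 1 - p 3 * v 1)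
        + (p 2 - p 3 * v 2) * conj (p 2 - p 3 * v 2) := by
    simp only [hermForm, map_sub, _root_.map_mul]
    linear_combination (conj (p 3)) * h2' + p 3 * h2c - p 3 * conj (p 3) * h1'
  have key2 : hermForm p p
      = ((Complex.normSq (p 1 - p 3 * v 1) + Complex.normSq (p 2 - p 3 * v 2) : ℝ) : ℂ) := by
    rw [key, Complex.mul_conj, Complex.mul_conj]; push_cast; ring
  constructor
  · rw [key2]; simp only [Complex.ofReal_re]
    exact add_nonneg (Complex.normSq_nonneg _) (Complex.normSq_nonneg _)
  · intro hre
    rw [key2] at hre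
    simp only [Complex.ofReal_re] at hre
    have ha : Complex.normSq (p 1 - p 3 * v 1) = 0 := by
      nlinarith [Complex.normSq_nonneg (p 1 - p 3 * v 1), Complex.normSq_nonneg (p 2 - p 3 * v 2)]
    have hb : Complex.normSq (p 2 - p 3 * v 2) = 0 := by
      nlinarith [Complex.normSq_nonneg (p 1 - p 3 * v 1), Complex.normSq_nonneg (p 2 - p 3 * v 2)]
    have ha' : p 1 = p 3 * v 1 := by
      have := Complex.normSq_eq_zero.mp ha; linear_combination this
    have hb' : p 2 = p 3 * v 2 := by
      have := Complex.normSq_eq_zero.mp hb; linear_combination this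
    refine ⟨p 3, ?_⟩
    funext i
    fin_cases i
    · show p 0 = p 3 * v 0
      linear_combination h2' - conj (v 1) * ha' - conj (v 2) * hb' - p 3 * h1'
    · exact ha'
    · exact hb'
    · show p 3 = p 3 * v 3
      rw [hv3, mul_one]

lemma lemC (v p : Vec4) (hv : hermForm v v = 0) (hv0 : v ≠ 0) (hp : hermForm p v = 0) :
    0 ≤ (hermForm p p).re ∧ ((hermForm p p).re = 0 → ∃ c : ℂ, p = c • v) := by
  by_cases h3 : v 3 = 0
  · have hvv : v 1 * conj (v 1) + v 2 * conj (v 2) = 0 := by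
      have := hv; simp only [hermForm, h3, _root_.map_zero, mul_zero, zero_mul] at this
      linear_combination this
    have hns : (Complex.normSq (v 1) + Complex.normSq (v 2) : ℝ) = 0 := by
      have : ((Complex.normSq (v 1) + Complex.normSq (v 2) : ℝ) : ℂ) = 0 := by
        push_cast; rw [← Complex.mul_conj, ← Complex.mul_conj]; exact hvv
      exact_mod_cast this
    have hv1 : v 1 = 0 := by
      have := Complex.normSq_nonneg (v 1); have := Complex.normSq_nonneg (v 2)
      have : Complex.normSq (v 1) = 0 := by nlinarith
      exact Complex.normSq_eq_zero.mp this
    have hv2 : v 2 = 0 := by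
      have := Complex.normSq_nonneg (v 1); have := Complex.normSq_nonneg (v 2)
      have : Complex.normSq (v 2) = 0 := by nlinarith
      exact Complex.normSq_eq_zero.mp this
    have hv00 : v 0 ≠ 0 := by
      intro h0; apply hv0; funext i; fin_cases i <;> simp [h0, hv1, hv2, h3]
    have hp3 : p 3 = 0 := by
      have := hp
      simp only [hermForm, h3, hv1, hv2, _root_.map_zero, mul_zero, zero_mul, add_zero,
        zero_add] at this
      rcases mul_eq_zero.mp this with h | h
      · exact h
      · exact absurd (by simpa using congrArg (starRingEnd ℂ) h) hv00
    have hppform : hermForm p p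
        = ((Complex.normSq (p 1) + Complex.normSq (p 2) : ℝ) : ℂ) := by
      simp only [hermForm, hp3, _root_.map_zero, mul_zero, zero_mul, add_zero]
      push_cast
      rw [← Complex.mul_conj, ← Complex.mul_conj]; ring
    constructor
    · rw [hppform]; simp only [Complex.ofReal_re]
      exact add_nonneg (Complex.normSq_nonneg _) (Complex.normSq_nonneg _)
    · intro hre
      rw [hppform] at hre; simp only [Complex.ofReal_re] at hre
      have hp1 : p 1 = 0 := by
        have := Complex.normSq_nonneg (p 1); have := Complex.normSq_nonneg (p 2)
        have : Complex.normSq (p 1) = 0 := by nlinarith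
        exact Complex.normSq_eq_zero.mp this
      have hp2 : p 2 = 0 := by
        have := Complex.normSq_nonneg (p 1); have := Complex.normSq_nonneg (p 2)
        have : Complex.normSq (p 2) = 0 := by nlinarith
        exact Complex.normSq_eq_zero.mp this
      refine ⟨p 0 / v 0, ?_⟩
      funext i; fin_cases i <;> simp [hp1, hp2, hp3, hv1, hv2, h3]
      field_simp
      try ring
  · set v' : Vec4 := (v 3)⁻¹ • v with hv'
    have hv'3 : v' 3 = 1 := by simp [hv', inv_mul_cancel₀ h3]
    have hv'null : hermForm v' v' = 0 := by
      rw [hv', herm_smul_smul, hv]; ring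
    have hpv' : hermForm p v' = 0 := by
      have : hermForm p v' = conj (v 3)⁻¹ * hermForm p v := by
        rw [hv']
        have := herm_smul_smul 1 (v 3)⁻¹ p v
        simpa using this
      rw [this, hp, mul_zero]
    obtain ⟨h1, h2⟩ := lemC1 v' p hv'3 hv'null hpv'
    refine ⟨h1, fun hre => ?_⟩
    obtain ⟨c, hc⟩ := h2 hre
    exact ⟨c * (v 3)⁻¹, by rw [hc, hv', smul_smul]⟩

lemma lemB (z w : Vec4) (hz : hermForm z z = 0) (hw : hermForm w w = 0)
    (ho : hermForm z w = 0) (hw0 : w ≠ 0) : ∃ c : ℂ, z = c • w :=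
  (lemC w z hw hw0 ho).2 (by rw [hz]; simp)

lemma gne (a b : Vec4) (ha : hermForm a a = 0) (hb : hermForm b b = 0) (hb0 : b ≠ 0)
    (hnp : ∀ c : ℂ, a ≠ c • b) : hermForm a b ≠ 0 := by
  intro h
  obtain ⟨c, hc⟩ := lemB a b ha hb h hb0
  exact hnp c hc

lemma gne' (a b : Vec4) (h : hermForm a b ≠ 0) : hermForm b a ≠ 0 := by
  rw [herm_conj]; simpa using h

lemma nullPerp (t v1 v2 : Vec4) (ht : hermForm t t = 0) (hv1 : hermForm v1 v1 = 0)
    (h1 : hermForm t v1 = 0) (h2 : hermForm t v2 = 0) (hv10 : v1 ≠ 0)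
    (h12 : hermForm v1 v2 ≠ 0) : t = 0 := by
  obtain ⟨c, hc⟩ := lemB t v1 ht hv1 h1 hv10
  have e : hermForm (c • v1) v2 = c * hermForm v1 v2 := by
    simpa using herm_smul_smul c 1 v1 v2
  have : c * hermForm v1 v2 = 0 := by rw [← e, ← hc]; exact h2
  rcases mul_eq_zero.mp this with h | h
  · rw [hc, h, zero_smul]
  · exact absurd h h12

lemma div_im_zero {N D : ℂ} (hD : D ≠ 0) (h : N * conj D = conj N * D) : (N / D).im = 0 := by
  have hDc : conj D ≠ 0 := by simpa using hD
  have : conj (N / D) = N / D := by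
    rw [map_div₀, div_eq_div_iff hDc hD]
    linear_combination -h
  exact Complex.conj_eq_iff_im.mp this

lemma lemD (z1 z2 z3 : Vec4) (hn1 : hermForm z1 z1 = 0) (hn2 : hermForm z2 z2 = 0)
    (hn3 : hermForm z3 z3 = 0) (hz1 : z1 ≠ 0) (h12 : hermForm z1 z2 ≠ 0) :
    (hermForm z1 z2 * hermForm z2 z3 * hermForm z3 z1).re ≤ 0 ∧
    ((hermForm z1 z2 * hermForm z2 z3 * hermForm z3 z1).re = 0 →
      ∃ a b : ℂ, z3 = a • z1 + b • z2) := by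
  set g := hermForm z1 z2 with hg
  have hgc : hermForm z2 z1 = conj g := herm_conj z1 z2
  have hgc0 : conj g ≠ 0 := by simpa using h12
  set a := hermForm z3 z2 / g with hadef
  set b := hermForm z3 z1 / conj g with hbdef
  set p := z3 - a • z1 - b • z2 with hpdef
  have hp1 : hermForm p z1 = 0 := by
    rw [hpdef, herm_sub2_left, hn1, hgc, hbdef]
    field_simp
    ring
  have hp2 : hermForm p z2 = 0 := by
    rw [hpdef, herm_sub2_left, hn2, hadef]
    field_simp
    rw [← hg]; ring
  have hpp : hermForm p p = - a * hermForm z1 z3 - b * hermForm z2 z3 := by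
    have e1 : hermForm p p = hermForm p z3 := by
      rw [hpdef]
      rw [herm_sub2_right a b z3 z1 z2 (z3 - a • z1 - b • z2)]
      rw [hp1, hp2]; ring
    have e2 : hermForm p z3 = hermForm z3 z3 - a * hermForm z1 z3 - b * hermForm z2 z3 := by
      rw [hpdef, herm_sub2_left]
    rw [e1, e2, hn3]; ring
  set S := hermForm z1 z2 * hermForm z2 z3 * hermForm z3 z1 with hS
  have hkey : hermForm p p * (g * conj g) = -(S + conj S) := by
    rw [hpp, hS, ← hg]
    have c1 : hermForm z1 z3 = conj (hermForm z3 z1) := herm_conj z3 z1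
    have c2 : hermForm z3 z2 = conj (hermForm z2 z3) := herm_conj z2 z3
    rw [hadef, hbdef, c2, c1]
    field_simp
    simp only [_root_.map_mul]
    ring
  have hre : Complex.normSq g * (hermForm p p).re = -(2 * S.re) := by
    have := congrArg Complex.re hkey
    rw [Complex.mul_conj, Complex.add_conj, mul_comm (hermForm p p)] at this
    simpa [Complex.re_ofReal_mul] using this
  have hppge : 0 ≤ (hermForm p p).re := (lemC z1 p hn1 hz1 hp1).1
  have hgpos : 0 < Complex.normSq g := by
    simpa [Complex.normSq_pos] using h12
  constructor
  · nlinarith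
  · intro hSre
    have hpp0 : (hermForm p p).re = 0 := by
      rw [hSre] at hre
      nlinarith
    obtain ⟨c, hc⟩ := (lemC z1 p hn1 hz1 hp1).2 hpp0
    refine ⟨a + c, b, ?_⟩
    have : z3 - a • z1 - b • z2 = c • z1 := by rw [← hpdef, hc]
    have h2 := congrArg (fun t => t + a • z1 + b • z2) this
    rw [show z3 - a • z1 - b • z2 + a • z1 + b • z2 = z3 by module] at h2
    rw [h2]; module

lemma lemCoplanar (w1 w2 w3 w4 : Vec4)
    (hn1 : hermForm w1 w1 = 0) (hn2 : hermForm w2 w2 = 0)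
    (hn3 : hermForm w3 w3 = 0) (hn4 : hermForm w4 w4 = 0)
    (h41 : hermForm w4 w1 ≠ 0) (h32 : hermForm w3 w2 ≠ 0)
    (hc3 : ∃ a b : ℂ, w3 = a • w1 + b • w2) (hc4 : ∃ a b : ℂ, w4 = a • w1 + b • w2) :
    (crossRatio w1 w2 w3 w4).im = 0 := by
  obtain ⟨α, β, h3⟩ := hc3
  obtain ⟨γ, δ, h4⟩ := hc4
  set g := hermForm w1 w2 with hg
  have hgc : hermForm w2 w1 = conj g := herm_conj w1 w2
  have e31 : hermForm w3 w1 = β * conj g := by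
    rw [h3, herm_comb2_left, hn1, hgc]; ring
  have e32 : hermForm w3 w2 = α * g := by
    rw [h3, herm_comb2_left, hn2, ← hg]; ring
  have e41 : hermForm w4 w1 = δ * conj g := by
    rw [h4, herm_comb2_left, hn1, hgc]; ring
  have e42 : hermForm w4 w2 = γ * g := by
    rw [h4, herm_comb2_left, hn2, ← hg]; ring
  have f13 : hermForm w1 w3 = conj β * g := by
    rw [herm_conj w3 w1, e31]; simp [_root_.map_mul]
  have f23 : hermForm w2 w3 = conj α * conj g := by
    rw [herm_conj w3 w2, e32]; simp [_root_.map_mul]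
  have f14 : hermForm w1 w4 = conj δ * g := by
    rw [herm_conj w4 w1, e41]; simp [_root_.map_mul]
  have f24 : hermForm w2 w4 = conj γ * conj g := by
    rw [herm_conj w4 w2, e42]; simp [_root_.map_mul]
  have n3 : α * conj β * g + β * conj α * conj g = 0 := by
    have := hn3
    nth_rewrite 1 [h3] at this
    rw [herm_comb2_left, f13, f23] at this
    linear_combination this
  have n4 : γ * conj δ * g + δ * conj γ * conj g = 0 := by
    have := hn4
    nth_rewrite 1 [h4] at this
    rw [herm_comb2_left, f14, f24] at this
    linear_combination this
  have hgne : g ≠ 0 := by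
    intro h; apply h32; rw [e32, h, mul_zero]
  have hgcne : conj g ≠ 0 := by simpa using hgne
  have key : (β * conj α) * (γ * conj δ) * (conj g * g)
      = (conj β * α) * (conj γ * δ) * (g * conj g) := by
    have l3 : β * conj α * conj g = -(α * conj β * g) := by linear_combination n3
    have l4 : γ * conj δ * g = -(δ * conj γ * conj g) := by linear_combination n4
    calc (β * conj α) * (γ * conj δ) * (conj g * g)
        = (β * conj α * conj g) * (γ * conj δ * g) := by ring
      _ = (-(α * conj β * g)) * (-(δ * conj γ * conj g)) := by rw [l3, l4]
      _ = (conj β * α) * (conj γ * δ) * (g * conj g) := by ring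
  unfold crossRatio
  apply div_im_zero (mul_ne_zero (by rw [e41]; exact mul_ne_zero (by rintro rfl; simp [e41] at h41) hgcne) h32)
  rw [e31, e32, e41, e42]
  simp only [_root_.map_mul, Complex.conj_conj]
  linear_combination (conj g * g) * key

lemma crossRatio_smul (a b c d : ℂ) (z1 z2 z3 z4 : Vec4)
    (ha : a ≠ 0) (hb : b ≠ 0) (hc : c ≠ 0) (hd : d ≠ 0) :
    crossRatio (a • z1) (b • z2) (c • z3) (d • z4) = crossRatio z1 z2 z3 z4 := by
  unfold crossRatio
  rw [herm_smul_smul, herm_smul_smul, herm_smul_smul, herm_smul_smul]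
  set t := c * conj a * (d * conj b) with ht
  have htne : t ≠ 0 := by
    apply mul_ne_zero (mul_ne_zero hc (by simpa using ha))
      (mul_ne_zero hd (by simpa using hb))
  rw [show c * conj a * hermForm z3 z1 * (d * conj b * hermForm z4 z2)
      = t * (hermForm z3 z1 * hermForm z4 z2) by rw [ht]; ring,
    show d * conj a * hermForm z4 z1 * (c * conj b * hermForm z3 z2)
      = t * (hermForm z4 z1 * hermForm z3 z2) by rw [ht]; ring,
    mul_div_mul_left _ _ htne]

def colMat (u : Fin 4 → Vec4) : Mat4 := Matrix.of fun i j => u j i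

lemma colMat_mulVec (u : Fin 4 → Vec4) (c : Fin 4 → ℂ) :
    (colMat u).mulVec c = c 0 • u 0 + c 1 • u 1 + c 2 • u 2 + c 3 • u 3 := by
  funext i
  simp [colMat, Matrix.mulVec, dotProduct, Fin.sum_univ_four, mul_comm]

lemma gram_entry (u : Fin 4 → Vec4) (i j : Fin 4) :
    ((colMat u)ᴴ * Hmat * colMat u) i j = hermForm (u j) (u i) := by
  simp [Matrix.mul_apply, Fin.sum_univ_four, Hmat, hermForm, colMat,
    Matrix.conjTranspose_apply]
  ring

lemma buildIso (u v : Fin 4 → Vec4)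
    (hGram : ∀ i j, hermForm (u i) (u j) = hermForm (v i) (v j))
    (hdet : (colMat u).det ≠ 0) :
    ∃ A : Mat4, Aᴴ * Hmat * A = Hmat ∧ ∀ j, A.mulVec (u j) = v j := by
  set W := colMat u with hW
  set V := colMat v with hV
  have : Invertible W := W.invertibleOfIsUnitDet hdet.isUnit
  refine ⟨V * W⁻¹, ?_, ?_⟩
  · have hWV : Vᴴ * Hmat * V = Wᴴ * Hmat * W := by
      ext i j
      show ((colMat v)ᴴ * Hmat * colMat v) i j = ((colMat u)ᴴ * Hmat * colMat u) i j
      rw [gram_entry, gram_entry, hGram]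
    have hWiH : (W⁻¹)ᴴ = (Wᴴ)⁻¹ := W.conjTranspose_nonsing_inv
    have hWinv : Invertible (Wᴴ) := W.invertibleConjTranspose
    calc (V * W⁻¹)ᴴ * Hmat * (V * W⁻¹)
        = (Wᴴ)⁻¹ * (Vᴴ * Hmat * V) * W⁻¹ := by
          rw [Matrix.conjTranspose_mul, hWiH]; noncomm_ring
      _ = (Wᴴ)⁻¹ * (Wᴴ * Hmat * W) * W⁻¹ := by rw [hWV]
      _ = ((Wᴴ)⁻¹ * Wᴴ) * Hmat * (W * W⁻¹) := by noncomm_ring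
      _ = Hmat := by rw [Matrix.inv_mul_of_invertible, Matrix.mul_inv_of_invertible]; simp
  · intro j
    have hcol : u j = W.mulVec (Pi.single j 1) := by
      funext i
      simp [hW, colMat, Matrix.mulVec, dotProduct, Pi.single_apply]
    have h1 : W⁻¹ *ᵥ (W *ᵥ Pi.single j 1) = Pi.single j 1 := by
      rw [Matrix.mulVec_mulVec, Matrix.inv_mul_of_invertible, Matrix.one_mulVec]
    show (V * W⁻¹) *ᵥ (u j) = v j
    rw [hcol, ← Matrix.mulVec_mulVec, h1]
    funext i
    simp [hV, colMat, Matrix.mulVec, dotProduct, Pi.single_apply]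

lemma detHmat : Hmat.det = -1 := by
  norm_num [Hmat, Matrix.det_succ_row_zero, Fin.sum_univ_succ]
  simp

lemma toSU (A0 : Mat4) (h : A0ᴴ * Hmat * A0 = Hmat) :
    ∃ ω : ℂ, ω ≠ 0 ∧ isSU31 (ω • A0) := by
  have hdet : conj (A0.det) * A0.det = 1 := by
    have h1 := congrArg Matrix.det h
    rw [Matrix.det_mul, Matrix.det_mul, Matrix.det_conjTranspose, detHmat] at h1
    rw [starRingEnd_apply]
    linear_combination -h1
  set δ := A0.det with hδdef
  have hδ0 : δ ≠ 0 := by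
    intro h0; rw [h0, mul_zero] at hdet; exact one_ne_zero hdet.symm
  obtain ⟨ω, hω⟩ := IsAlgClosed.exists_pow_nat_eq (k := ℂ) δ⁻¹ (n := 4) (by norm_num)
  have hω0 : ω ≠ 0 := by
    intro h0
    rw [h0] at hω
    have : δ⁻¹ = 0 := by simpa using hω.symm
    exact hδ0 (inv_eq_zero.mp this)
  have hnδ : Complex.normSq δ = 1 := by
    have := hdet
    rw [mul_comm, Complex.mul_conj] at this
    exact_mod_cast this
  have hn4 : Complex.normSq ω ^ 4 = 1 := by
    have := congrArg Complex.normSq hω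
    rw [map_pow, map_inv₀, hnδ] at this
    simpa using this
  have hnω : Complex.normSq ω = 1 := by
    have hfac : (Complex.normSq ω - 1) *
        ((Complex.normSq ω)^3 + (Complex.normSq ω)^2 + Complex.normSq ω + 1) = 0 := by
      linear_combination hn4
    have hns := Complex.normSq_nonneg ω
    have hpos : (0:ℝ) < (Complex.normSq ω)^3 + (Complex.normSq ω)^2 + Complex.normSq ω + 1 := by
      nlinarith
    have := mul_eq_zero.mp hfac
    rcases this with h1 | h1
    · linarith
    · linarith
  have hcω : conj ω * ω = 1 := by
    rw [mul_comm, Complex.mul_conj, hnω]; simp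
  refine ⟨ω, hω0, ?_, ?_⟩
  · rw [Matrix.conjTranspose_smul, Matrix.smul_mul, Matrix.mul_smul, Matrix.smul_mul,
      smul_smul, h, mul_comm ω]
    rw [show (star ω * ω : ℂ) = conj ω * ω from rfl, hcω, one_smul]
  · rw [Matrix.det_smul]
    simp only [Fintype.card_fin]
    rw [← hδdef, hω]
    exact inv_mul_cancel₀ hδ0

lemma extendOrth (u1 u2 u3 : Vec4) (h1 : hermForm u1 u1 = 0) (hu1 : u1 ≠ 0)
    (h12 : hermForm u1 u2 ≠ 0) :
    ∃ n : Vec4, hermForm n u1 = 0 ∧ hermForm n u2 = 0 ∧ hermForm n u3 = 0 ∧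
      hermForm n n = 1 := by
  set B : Mat4 := Matrix.of
    (fun i j => if i = 3 then 0 else
      ![conj ((![u1,u2,u3,u3] i) 3), conj ((![u1,u2,u3,u3] i) 1),
        conj ((![u1,u2,u3,u3] i) 2), conj ((![u1,u2,u3,u3] i) 0)] j) with hB
  have hdetB : B.det = 0 := by
    apply Matrix.det_eq_zero_of_row_eq_zero 3
    intro j; simp [hB]
  obtain ⟨m, hm0, hm⟩ := (Matrix.exists_mulVec_eq_zero_iff).mpr hdetB
  have hmu1 : hermForm m u1 = 0 := by
    have := congrFun hm 0
    simpa [hB, Matrix.mulVec, dotProduct, Fin.sum_univ_four, hermForm, mul_comm] using this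
  have hmu2 : hermForm m u2 = 0 := by
    have := congrFun hm 1
    simpa [hB, Matrix.mulVec, dotProduct, Fin.sum_univ_four, hermForm, mul_comm] using this
  have hmu3 : hermForm m u3 = 0 := by
    have := congrFun hm 2
    simpa [hB, Matrix.mulVec, dotProduct, Fin.sum_univ_four, hermForm, mul_comm] using this
  have hposC := lemC u1 m h1 hu1 hmu1
  have hpos : 0 < (hermForm m m).re := by
    rcases lt_or_eq_of_le hposC.1 with h | h
    · exact h
    · exfalso
      obtain ⟨c, hc⟩ := hposC.2 h.symm
      have hc0 : c ≠ 0 := by rintro rfl; simp at hc; exact hm0 hc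
      apply h12
      have : hermForm m u2 = c * hermForm u1 u2 := by rw [hc, herm_smul_left']
      rw [hmu2] at this
      exact (mul_eq_zero.mp this.symm).resolve_left hc0
  set r := (hermForm m m).re with hr
  set s : ℝ := Real.sqrt r with hs
  have hspos : 0 < s := Real.sqrt_pos.mpr hpos
  refine ⟨((s : ℂ))⁻¹ • m, ?_, ?_, ?_, ?_⟩
  · rw [herm_smul_left', hmu1, mul_zero]
  · rw [herm_smul_left', hmu2, mul_zero]
  · rw [herm_smul_left', hmu3, mul_zero]
  · rw [herm_smul_smul]
    rw [herm_self_re m]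
    have : conj ((s:ℂ))⁻¹ = ((s:ℂ))⁻¹ := by
      simp [map_inv₀, Complex.conj_ofReal]
    have hs2 : (s:ℂ) * (s:ℂ) = (r:ℂ) := by
      rw [← Complex.ofReal_mul, Real.mul_self_sqrt hpos.le]
    rw [this, ← mul_inv, hs2]
    exact inv_mul_cancel₀ (by exact_mod_cast hpos.ne')

lemma dep_transfer (u v : Fin 4 → Vec4)
    (hGram : ∀ i j, hermForm (u i) (u j) = hermForm (v i) (v j))
    (hnullv : ∀ i, hermForm (v i) (v i) = 0) (hv0 : v 0 ≠ 0)
    (h12 : hermForm (v 0) (v 1) ≠ 0)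
    (c : Fin 4 → ℂ) (hdep : c 0 • u 0 + c 1 • u 1 + c 2 • u 2 + c 3 • u 3 = 0) :
    c 0 • v 0 + c 1 • v 1 + c 2 • v 2 + c 3 • v 3 = 0 := by
  set t := c 0 • v 0 + c 1 • v 1 + c 2 • v 2 + c 3 • v 3 with htdef
  have hpair : ∀ k, hermForm t (v k) = 0 := by
    intro k
    rw [htdef, herm_comb4_left]
    have hu : ∀ k, c 0 * hermForm (u 0) (u k) + c 1 * hermForm (u 1) (u k)
        + c 2 * hermForm (u 2) (u k) + c 3 * hermForm (u 3) (u k) = 0 := by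
      intro k
      rw [← herm_comb4_left, hdep, herm_zero_left]
    rw [← hGram 0 k, ← hGram 1 k, ← hGram 2 k, ← hGram 3 k]
    exact hu k
  have htt : hermForm t t = 0 := by
    nth_rewrite 2 [htdef]
    rw [herm_comb4_right, hpair 0, hpair 1, hpair 2, hpair 3]
    ring
  exact nullPerp t (v 0) (v 1) htt (hnullv 0) (hpair 0) (hpair 1) hv0 h12

end CR8Helpers

set_option maxHeartbeats 2000000 in
/-- two quadruples of pairwise non-proportional null vectors with
the same (non-real) cross-ratios are equivalent under SU(3,1). -/
theorem crossRatio_determines_quadruple (z1 z2 z3 z4 z1' z2' z3' z4' : Vec4)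
    (hz1 : z1 ≠ 0) (hz2 : z2 ≠ 0) (hz3 : z3 ≠ 0) (hz4 : z4 ≠ 0)
    (hz1' : z1' ≠ 0) (hz2' : z2' ≠ 0) (hz3' : z3' ≠ 0) (hz4' : z4' ≠ 0)
    (hn1 : hermForm z1 z1 = 0) (hn2 : hermForm z2 z2 = 0)
    (hn3 : hermForm z3 z3 = 0) (hn4 : hermForm z4 z4 = 0)
    (hn1' : hermForm z1' z1' = 0) (hn2' : hermForm z2' z2' = 0)
    (hn3' : hermForm z3' z3' = 0) (hn4' : hermForm z4' z4' = 0)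
    (hp : PairwiseNotProp4 z1 z2 z3 z4) (hp' : PairwiseNotProp4 z1' z2' z3' z4')
    (hX1 : (crossRatio z1 z2 z3 z4).im ≠ 0)
    (hX2 : (crossRatio z1 z3 z2 z4).im ≠ 0)
    (hX3 : (crossRatio z2 z3 z1 z4).im ≠ 0)
    (he1 : crossRatio z1' z2' z3' z4' = crossRatio z1 z2 z3 z4)
    (he2 : crossRatio z1' z3' z2' z4' = crossRatio z1 z3 z2 z4)
    (he3 : crossRatio z2' z3' z1' z4' = crossRatio z2 z3 z1 z4) :
    ∃ A : Mat4, isSU31 A ∧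
      ∃ l1 l2 l3 l4 : ℂ, l1 ≠ 0 ∧ l2 ≠ 0 ∧ l3 ≠ 0 ∧ l4 ≠ 0 ∧
        A.mulVec z1 = l1 • z1' ∧ A.mulVec z2 = l2 • z2' ∧
        A.mulVec z3 = l3 • z3' ∧ A.mulVec z4 = l4 • z4' := by
  obtain ⟨hp12, hp13, hp14, hp23, hp24, hp34⟩ := hp
  obtain ⟨hr12, hr13, hr14, hr23, hr24, hr34⟩ := hp'
  have n12 : hermForm z1 z2 ≠ 0 := gne _ _ hn1 hn2 hz2 hp12
  have n13 : hermForm z1 z3 ≠ 0 := gne _ _ hn1 hn3 hz3 hp13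
  have n14 : hermForm z1 z4 ≠ 0 := gne _ _ hn1 hn4 hz4 hp14
  have n23 : hermForm z2 z3 ≠ 0 := gne _ _ hn2 hn3 hz3 hp23
  have n24 : hermForm z2 z4 ≠ 0 := gne _ _ hn2 hn4 hz4 hp24
  have n34 : hermForm z3 z4 ≠ 0 := gne _ _ hn3 hn4 hz4 hp34
  have n21 := gne' _ _ n12
  have n31 := gne' _ _ n13
  have n41 := gne' _ _ n14
  have n32 := gne' _ _ n23
  have n42 := gne' _ _ n24
  have n43 := gne' _ _ n34
  have m12 : hermForm z1' z2' ≠ 0 := gne _ _ hn1' hn2' hz2' hr12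
  have m13 : hermForm z1' z3' ≠ 0 := gne _ _ hn1' hn3' hz3' hr13
  have m14 : hermForm z1' z4' ≠ 0 := gne _ _ hn1' hn4' hz4' hr14
  have m23 : hermForm z2' z3' ≠ 0 := gne _ _ hn2' hn3' hz3' hr23
  have m24 : hermForm z2' z4' ≠ 0 := gne _ _ hn2' hn4' hz4' hr24
  have m34 : hermForm z3' z4' ≠ 0 := gne _ _ hn3' hn4' hz4' hr34
  have m21 := gne' _ _ m12
  have m31 := gne' _ _ m13
  have m41 := gne' _ _ m14
  have m32 := gne' _ _ m23
  have m42 := gne' _ _ m24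
  have m43 := gne' _ _ m34
  -- cross-multiplied cross-ratio relations
  have R1 : hermForm z3' z1' * hermForm z4' z2' * (hermForm z4 z1 * hermForm z3 z2)
      = hermForm z3 z1 * hermForm z4 z2 * (hermForm z4' z1' * hermForm z3' z2') := by
    have h := he1
    unfold crossRatio at h
    rw [div_eq_div_iff (mul_ne_zero m41 m32) (mul_ne_zero n41 n32)] at h
    linear_combination h
  have R2 : hermForm z2' z1' * hermForm z4' z3' * (hermForm z4 z1 * hermForm z2 z3)
      = hermForm z2 z1 * hermForm z4 z3 * (hermForm z4' z1' * hermForm z2' z3') := by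
    have h := he2
    unfold crossRatio at h
    rw [div_eq_div_iff (mul_ne_zero m41 m23) (mul_ne_zero n41 n23)] at h
    linear_combination h
  have R3 : hermForm z1' z2' * hermForm z4' z3' * (hermForm z4 z2 * hermForm z1 z3)
      = hermForm z1 z2 * hermForm z4 z3 * (hermForm z4' z2' * hermForm z1' z3') := by
    have h := he3
    unfold crossRatio at h
    rw [div_eq_div_iff (mul_ne_zero m42 m13) (mul_ne_zero n42 n13)] at h
    linear_combination h
  -- the real scaling factor q
  have D1ne : hermForm z2 z1 * hermForm z1 z3 * hermForm z2' z3' ≠ 0 :=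
    mul_ne_zero (mul_ne_zero n21 n13) m23
  have D2ne : hermForm z4 z1 * hermForm z1 z3 * hermForm z4' z3' ≠ 0 :=
    mul_ne_zero (mul_ne_zero n41 n13) m43
  have D3ne : hermForm z4 z1 * hermForm z1 z2 * hermForm z4' z2' ≠ 0 :=
    mul_ne_zero (mul_ne_zero n41 n12) m42
  have D4ne : hermForm z3 z1 * hermForm z1 z2 * hermForm z3' z2' ≠ 0 :=
    mul_ne_zero (mul_ne_zero n31 n12) m32
  have N1ne : hermForm z2' z1' * hermForm z1' z3' * hermForm z2 z3 ≠ 0 :=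
    mul_ne_zero (mul_ne_zero m21 m13) n23
  obtain ⟨q, hqdef⟩ : ∃ t : ℂ, t = (hermForm z2' z1' * hermForm z1' z3' * hermForm z2 z3) /
      (hermForm z2 z1 * hermForm z1 z3 * hermForm z2' z3') := ⟨_, rfl⟩
  have qne : q ≠ 0 := by rw [hqdef]; exact div_ne_zero N1ne D1ne
  have hq2 : q = (hermForm z4' z1' * hermForm z1' z3' * hermForm z4 z3) /
      (hermForm z4 z1 * hermForm z1 z3 * hermForm z4' z3') := by
    rw [hqdef, div_eq_div_iff D1ne D2ne]
    linear_combination (hermForm z1 z3 * hermForm z1' z3') * R2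
  have hq3 : q = (hermForm z4' z1' * hermForm z1' z2' * hermForm z4 z2) /
      (hermForm z4 z1 * hermForm z1 z2 * hermForm z4' z2') := by
    rw [hq2, div_eq_div_iff D2ne D3ne]
    linear_combination -(hermForm z4 z1 * hermForm z4' z1') * R3
  have hq4 : q = (hermForm z3' z1' * hermForm z1' z2' * hermForm z3 z2) /
      (hermForm z3 z1 * hermForm z1 z2 * hermForm z3' z2') := by
    rw [hq3, div_eq_div_iff D3ne D4ne]
    linear_combination -(hermForm z1 z2 * hermForm z1' z2') * R1
  have hqconj : conj q = q := by
    rw [hqdef, map_div₀]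
    simp only [_root_.map_mul]
    rw [← herm_conj z2' z1', ← herm_conj z1' z3', ← herm_conj z2 z3,
      ← herm_conj z2 z1, ← herm_conj z1 z3, ← herm_conj z2' z3']
    have h4 := hq4
    rw [hqdef] at h4
    rw [h4]
    rw [div_eq_div_iff (mul_ne_zero (mul_ne_zero n12 n31) m32) D4ne]
    ring
  have hqre : q = ((q.re : ℝ) : ℂ) := (Complex.conj_eq_iff_re.mp hqconj).symm
  have hqre_ne : q.re ≠ 0 := by
    intro h0
    apply qne
    rw [hqre, h0, Complex.ofReal_zero]
  -- multiplicative identities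
  have I23 : hermForm z2' z1' * hermForm z1' z3' * hermForm z2 z3
      = q * (hermForm z2 z1 * hermForm z1 z3 * hermForm z2' z3') := by
    rw [hqdef, div_mul_cancel₀ _ D1ne]
  have I24 : hermForm z2' z1' * hermForm z1' z4' * hermForm z2 z4
      = q * (hermForm z2 z1 * hermForm z1 z4 * hermForm z2' z4') := by
    have h' : hermForm z4' z1' * hermForm z1' z2' * hermForm z4 z2
        = q * (hermForm z4 z1 * hermForm z1 z2 * hermForm z4' z2') := by
      rw [hq3, div_mul_cancel₀ _ D3ne]
    have hc := congrArg (starRingEnd ℂ) h'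
    simp only [_root_.map_mul] at hc
    rw [← herm_conj z4' z1', ← herm_conj z1' z2', ← herm_conj z4 z2,
      ← herm_conj z4 z1, ← herm_conj z1 z2, ← herm_conj z4' z2', hqconj] at hc
    linear_combination hc
  have I34 : hermForm z3' z1' * hermForm z1' z4' * hermForm z3 z4
      = q * (hermForm z3 z1 * hermForm z1 z4 * hermForm z3' z4') := by
    have h' : hermForm z4' z1' * hermForm z1' z3' * hermForm z4 z3
        = q * (hermForm z4 z1 * hermForm z1 z3 * hermForm z4' z3') := by
      rw [hq2, div_mul_cancel₀ _ D2ne]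
    have hc := congrArg (starRingEnd ℂ) h'
    simp only [_root_.map_mul] at hc
    rw [← herm_conj z4' z1', ← herm_conj z1' z3', ← herm_conj z4 z3,
      ← herm_conj z4 z1, ← herm_conj z1 z3, ← herm_conj z4' z3', hqconj] at hc
    linear_combination hc
  rcases lt_trichotomy q.re 0 with hqneg | hqzero | hqpos
  · -- q < 0 : contradiction with non-real cross ratio
    exfalso
    set s : ℝ := Real.sqrt (-q.re) with hsdef
    have hspos : 0 < s := Real.sqrt_pos.mpr (by linarith)
    have hsne : (s:ℂ) ≠ 0 := by exact_mod_cast hspos.ne'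
    have hss : (s:ℂ) * (s:ℂ) = -q := by
      rw [← Complex.ofReal_mul, hsdef, Real.mul_self_sqrt (by linarith),
        Complex.ofReal_neg, ← hqre]
    set l1 : ℂ := (s:ℂ) with hl1
    set l2 : ℂ := hermForm z2' z1' / (hermForm z2 z1 * s) with hl2
    set l3 : ℂ := hermForm z3' z1' / (hermForm z3 z1 * s) with hl3
    set l4 : ℂ := hermForm z4' z1' / (hermForm z4 z1 * s) with hl4
    have l1ne : l1 ≠ 0 := hsne
    have l2ne : l2 ≠ 0 := div_ne_zero m21 (mul_ne_zero n21 hsne)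
    have l3ne : l3 ≠ 0 := div_ne_zero m31 (mul_ne_zero n31 hsne)
    have l4ne : l4 ≠ 0 := div_ne_zero m41 (mul_ne_zero n41 hsne)
    have cl1 : conj l1 = l1 := by rw [hl1, Complex.conj_ofReal]
    have cl2 : conj l2 = hermForm z1' z2' / (hermForm z1 z2 * s) := by
      rw [hl2, map_div₀, _root_.map_mul, ← herm_conj z2' z1', ← herm_conj z2 z1,
        Complex.conj_ofReal]
    have cl3 : conj l3 = hermForm z1' z3' / (hermForm z1 z3 * s) := by
      rw [hl3, map_div₀, _root_.map_mul, ← herm_conj z3' z1', ← herm_conj z3 z1,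
        Complex.conj_ofReal]
    have cl4 : conj l4 = hermForm z1' z4' / (hermForm z1 z4 * s) := by
      rw [hl4, map_div₀, _root_.map_mul, ← herm_conj z4' z1', ← herm_conj z4 z1,
        Complex.conj_ofReal]
    -- pairings of scaled vectors
    have K12 : hermForm (l1 • z1) (l2 • z2) = hermForm z1' z2' := by
      rw [herm_smul_smul, cl2, hl1]
      field_simp [hspos.ne']
      try ring
    have K41 : hermForm (l4 • z4) (l1 • z1) = hermForm z4' z1' := by
      rw [herm_smul_smul, cl1, hl1, hl4]
      field_simp [hspos.ne']
      try ring
    have K23 : hermForm (l2 • z2) (l3 • z3) = -hermForm z2' z3' := by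
      rw [herm_smul_smul, cl3, hl2]
      field_simp [hspos.ne']
      try ring
      linear_combination hermForm z1 z3 * hermForm z2 z1 * hermForm z2' z3' * hss + I23
    have K24 : hermForm (l2 • z2) (l4 • z4) = -hermForm z2' z4' := by
      rw [herm_smul_smul, cl4, hl2]
      field_simp [hspos.ne']
      try ring
      linear_combination hermForm z1 z4 * hermForm z2 z1 * hermForm z2' z4' * hss + I24
    have K32 : hermForm (l3 • z3) (l2 • z2) = -hermForm z3' z2' := by
      rw [herm_conj (l2 • z2) (l3 • z3), K23, herm_conj z2' z3']
      simp
    have hw1n : hermForm (l1 • z1) (l1 • z1) = 0 := by rw [herm_smul_smul, hn1, mul_zero]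
    have hw2n : hermForm (l2 • z2) (l2 • z2) = 0 := by rw [herm_smul_smul, hn2, mul_zero]
    have hw3n : hermForm (l3 • z3) (l3 • z3) = 0 := by rw [herm_smul_smul, hn3, mul_zero]
    have hw4n : hermForm (l4 • z4) (l4 • z4) = 0 := by rw [herm_smul_smul, hn4, mul_zero]
    have hw1ne : l1 • z1 ≠ 0 := smul_ne_zero l1ne hz1
    have hK12ne : hermForm (l1 • z1) (l2 • z2) ≠ 0 := by rw [K12]; exact m12
    -- triple (1,2,3)
    have T1 := (lemD z1' z2' z3' hn1' hn2' hn3' hz1' m12).1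
    have T2 := lemD (l1 • z1) (l2 • z2) (l3 • z3) hw1n hw2n hw3n hw1ne hK12ne
    have K31 : hermForm (l3 • z3) (l1 • z1) = hermForm z3' z1' := by
      rw [herm_smul_smul, cl1, hl1, hl3]
      field_simp [hspos.ne']
      try ring
    have hprod3 : hermForm (l1 • z1) (l2 • z2) * hermForm (l2 • z2) (l3 • z3)
        * hermForm (l3 • z3) (l1 • z1)
        = -(hermForm z1' z2' * hermForm z2' z3' * hermForm z3' z1') := by
      rw [K12, K23, K31]; ring
    have hS3 : (hermForm z1' z2' * hermForm z2' z3' * hermForm z3' z1').re = 0 := by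
      have h2 := T2.1
      rw [hprod3] at h2
      simp only [Complex.neg_re] at h2
      linarith
    have hsp3 : ∃ a b : ℂ, l3 • z3 = a • (l1 • z1) + b • (l2 • z2) := by
      apply T2.2
      rw [hprod3]
      simp only [Complex.neg_re]
      linarith
    -- triple (1,2,4)
    have T3 := (lemD z1' z2' z4' hn1' hn2' hn4' hz1' m12).1
    have T4 := lemD (l1 • z1) (l2 • z2) (l4 • z4) hw1n hw2n hw4n hw1ne hK12ne
    have hprod4 : hermForm (l1 • z1) (l2 • z2) * hermForm (l2 • z2) (l4 • z4)
        * hermForm (l4 • z4) (l1 • z1)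
        = -(hermForm z1' z2' * hermForm z2' z4' * hermForm z4' z1') := by
      rw [K12, K24, K41]; ring
    have hsp4 : ∃ a b : ℂ, l4 • z4 = a • (l1 • z1) + b • (l2 • z2) := by
      apply T4.2
      rw [hprod4]
      simp only [Complex.neg_re]
      have h2 := T4.1
      rw [hprod4] at h2
      simp only [Complex.neg_re] at h2
      linarith
    have him := lemCoplanar (l1 • z1) (l2 • z2) (l3 • z3) (l4 • z4) hw1n hw2n hw3n hw4n
      (by rw [K41]; exact m41) (by rw [K32]; simpa using m32) hsp3 hsp4
    rw [crossRatio_smul l1 l2 l3 l4 z1 z2 z3 z4 l1ne l2ne l3ne l4ne] at him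
    exact hX1 him
  · exact absurd hqzero hqre_ne
  · -- q > 0 : construct the isometry
    set s : ℝ := Real.sqrt q.re with hsdef
    have hspos : 0 < s := Real.sqrt_pos.mpr hqpos
    have hsne : (s:ℂ) ≠ 0 := by exact_mod_cast hspos.ne'
    have hss : (s:ℂ) * (s:ℂ) = q := by
      rw [← Complex.ofReal_mul, hsdef, Real.mul_self_sqrt hqpos.le]
      exact hqre.symm
    set l1 : ℂ := (s:ℂ) with hl1
    set l2 : ℂ := hermForm z2' z1' / (hermForm z2 z1 * s) with hl2
    set l3 : ℂ := hermForm z3' z1' / (hermForm z3 z1 * s) with hl3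
    set l4 : ℂ := hermForm z4' z1' / (hermForm z4 z1 * s) with hl4
    have l1ne : l1 ≠ 0 := hsne
    have l2ne : l2 ≠ 0 := div_ne_zero m21 (mul_ne_zero n21 hsne)
    have l3ne : l3 ≠ 0 := div_ne_zero m31 (mul_ne_zero n31 hsne)
    have l4ne : l4 ≠ 0 := div_ne_zero m41 (mul_ne_zero n41 hsne)
    have cl1 : conj l1 = l1 := by rw [hl1, Complex.conj_ofReal]
    have cl2 : conj l2 = hermForm z1' z2' / (hermForm z1 z2 * s) := by
      rw [hl2, map_div₀, _root_.map_mul, ← herm_conj z2' z1', ← herm_conj z2 z1,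
        Complex.conj_ofReal]
    have cl3 : conj l3 = hermForm z1' z3' / (hermForm z1 z3 * s) := by
      rw [hl3, map_div₀, _root_.map_mul, ← herm_conj z3' z1', ← herm_conj z3 z1,
        Complex.conj_ofReal]
    have cl4 : conj l4 = hermForm z1' z4' / (hermForm z1 z4 * s) := by
      rw [hl4, map_div₀, _root_.map_mul, ← herm_conj z4' z1', ← herm_conj z4 z1,
        Complex.conj_ofReal]
    set u : Fin 4 → Vec4 := ![l1 • z1, l2 • z2, l3 • z3, l4 • z4] with hu
    set v : Fin 4 → Vec4 := ![z1', z2', z3', z4'] with hv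
    have e11 : hermForm (l1 • z1) (l1 • z1) = hermForm z1' z1' := by
      rw [herm_smul_smul, hn1, hn1', mul_zero]
    have e22 : hermForm (l2 • z2) (l2 • z2) = hermForm z2' z2' := by
      rw [herm_smul_smul, hn2, hn2', mul_zero]
    have e33 : hermForm (l3 • z3) (l3 • z3) = hermForm z3' z3' := by
      rw [herm_smul_smul, hn3, hn3', mul_zero]
    have e44 : hermForm (l4 • z4) (l4 • z4) = hermForm z4' z4' := by
      rw [herm_smul_smul, hn4, hn4', mul_zero]
    have e12 : hermForm (l1 • z1) (l2 • z2) = hermForm z1' z2' := by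
      rw [herm_smul_smul, cl2, hl1]; field_simp [hspos.ne']; try ring
    have e13 : hermForm (l1 • z1) (l3 • z3) = hermForm z1' z3' := by
      rw [herm_smul_smul, cl3, hl1]; field_simp [hspos.ne']; try ring
    have e14 : hermForm (l1 • z1) (l4 • z4) = hermForm z1' z4' := by
      rw [herm_smul_smul, cl4, hl1]; field_simp [hspos.ne']; try ring
    have e21 : hermForm (l2 • z2) (l1 • z1) = hermForm z2' z1' := by
      rw [herm_conj (l1 • z1) (l2 • z2), e12, ← herm_conj z1' z2']
    have e31 : hermForm (l3 • z3) (l1 • z1) = hermForm z3' z1' := by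
      rw [herm_conj (l1 • z1) (l3 • z3), e13, ← herm_conj z1' z3']
    have e41 : hermForm (l4 • z4) (l1 • z1) = hermForm z4' z1' := by
      rw [herm_conj (l1 • z1) (l4 • z4), e14, ← herm_conj z1' z4']
    have e23 : hermForm (l2 • z2) (l3 • z3) = hermForm z2' z3' := by
      rw [herm_smul_smul, cl3, hl2]
      field_simp [hspos.ne']
      try ring
      linear_combination I23 - hermForm z1 z3 * hermForm z2 z1 * hermForm z2' z3' * hss
    have e24 : hermForm (l2 • z2) (l4 • z4) = hermForm z2' z4' := by
      rw [herm_smul_smul, cl4, hl2]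
      field_simp [hspos.ne']
      try ring
      linear_combination I24 - hermForm z1 z4 * hermForm z2 z1 * hermForm z2' z4' * hss
    have e34 : hermForm (l3 • z3) (l4 • z4) = hermForm z3' z4' := by
      rw [herm_smul_smul, cl4, hl3]
      field_simp [hspos.ne']
      try ring
      linear_combination I34 - hermForm z1 z4 * hermForm z3 z1 * hermForm z3' z4' * hss
    have e32 : hermForm (l3 • z3) (l2 • z2) = hermForm z3' z2' := by
      rw [herm_conj (l2 • z2) (l3 • z3), e23, ← herm_conj z2' z3']
    have e42 : hermForm (l4 • z4) (l2 • z2) = hermForm z4' z2' := by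
      rw [herm_conj (l2 • z2) (l4 • z4), e24, ← herm_conj z2' z4']
    have e43 : hermForm (l4 • z4) (l3 • z3) = hermForm z4' z3' := by
      rw [herm_conj (l3 • z3) (l4 • z4), e34, ← herm_conj z3' z4']
    have hGram : ∀ i j, hermForm (u i) (u j) = hermForm (v i) (v j) := by
      intro i j
      fin_cases i <;> fin_cases j <;>
        first
          | exact e11 | exact e12 | exact e13 | exact e14
          | exact e21 | exact e22 | exact e23 | exact e24
          | exact e31 | exact e32 | exact e33 | exact e34
          | exact e41 | exact e42 | exact e43 | exact e44
    have hnull_u : ∀ i, hermForm (u i) (u i) = 0 := by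
      intro i
      fin_cases i
      · exact e11.trans hn1'
      · exact e22.trans hn2'
      · exact e33.trans hn3'
      · exact e44.trans hn4'
    have hnull_v : ∀ i, hermForm (v i) (v i) = 0 := by
      intro i
      fin_cases i
      · exact hn1'
      · exact hn2'
      · exact hn3'
      · exact hn4'
    have hv0ne : v 0 ≠ 0 := hz1'
    have hm12' : hermForm (v 0) (v 1) ≠ 0 := m12
    have hu0ne : u 0 ≠ 0 := smul_ne_zero l1ne hz1
    have hw12 : hermForm (u 0) (u 1) ≠ 0 := by
      show hermForm (l1 • z1) (l2 • z2) ≠ 0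
      rw [e12]; exact m12
    -- main construction
    have hA : ∃ A0 : Mat4, A0ᴴ * Hmat * A0 = Hmat ∧ ∀ j, A0.mulVec (u j) = v j := by
      by_cases hdet : (colMat u).det = 0
      · obtain ⟨cc, hcc0, hccv⟩ := Matrix.exists_mulVec_eq_zero_iff.mpr hdet
        have hdep : cc 0 • u 0 + cc 1 • u 1 + cc 2 • u 2 + cc 3 • u 3 = 0 := by
          rw [← colMat_mulVec]; exact hccv
        have hpairind : ∀ a b : ℂ, a • u 0 + b • u 1 = 0 → a = 0 ∧ b = 0 := by
          intro a b hab
          have h1 : hermForm (a • u 0 + b • u 1) (u 1) = 0 := by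
            rw [hab, herm_zero_left]
          rw [herm_comb2_left, hnull_u 1] at h1
          have ha0 : a = 0 := by
            have : a * hermForm (u 0) (u 1) = 0 := by linear_combination h1
            exact (mul_eq_zero.mp this).resolve_right hw12
          have hb0 : b = 0 := by
            rw [ha0, zero_smul, zero_add] at hab
            rcases smul_eq_zero.mp hab with h | h
            · exact h
            · exact absurd h (smul_ne_zero l2ne hz2)
          exact ⟨ha0, hb0⟩
        have spanOf : ∀ k : Fin 4,
            (¬ ∀ a b c : ℂ, a • u 0 + b • u 1 + c • u k = 0 → a = 0 ∧ b = 0 ∧ c = 0) →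
            ∃ α β : ℂ, u k = α • u 0 + β • u 1 := by
          intro k hk
          push_neg at hk
          obtain ⟨a, b, c, hcomb, hne⟩ := hk
          by_cases hc : c = 0
          · exfalso
            rw [hc, zero_smul, add_zero] at hcomb
            obtain ⟨ha, hb⟩ := hpairind a b hcomb
            exact hne ha hb hc
          · refine ⟨-a/c, -b/c, ?_⟩
            funext i
            have h := congrFun hcomb i
            simp only [Pi.add_apply, Pi.smul_apply, smul_eq_mul, Pi.zero_apply] at h ⊢
            field_simp
            linear_combination h
        have hdepv := dep_transfer u v hGram hnull_v hv0ne hm12' cc hdep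
        by_cases hT3 : ∀ a b c : ℂ, a • u 0 + b • u 1 + c • u 2 = 0 → a = 0 ∧ b = 0 ∧ c = 0
        · -- triple (0,1,2) independent; leftover index 3
          have hc3 : cc 3 ≠ 0 := by
            intro h0
            have hcomb : cc 0 • u 0 + cc 1 • u 1 + cc 2 • u 2 = 0 := by
              have h := hdep
              rw [h0, zero_smul, add_zero] at h
              exact h
            obtain ⟨h1, h2, h3⟩ := hT3 _ _ _ hcomb
            apply hcc0
            funext i
            fin_cases i <;> simp [h1, h2, h3, h0]
          have hu3 : u 3 = (-(cc 0)/cc 3) • u 0 + (-(cc 1)/cc 3) • u 1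
              + (-(cc 2)/cc 3) • u 2 := by
            funext i
            have h := congrFun hdep i
            simp only [Pi.add_apply, Pi.smul_apply, smul_eq_mul, Pi.zero_apply] at h ⊢
            field_simp
            linear_combination h
          have hv3 : v 3 = (-(cc 0)/cc 3) • v 0 + (-(cc 1)/cc 3) • v 1
              + (-(cc 2)/cc 3) • v 2 := by
            funext i
            have h := congrFun hdepv i
            simp only [Pi.add_apply, Pi.smul_apply, smul_eq_mul, Pi.zero_apply] at h ⊢
            field_simp
            linear_combination h
          obtain ⟨nn, hnu1, hnu2, hnu3, hnn⟩ :=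
            extendOrth (u 0) (u 1) (u 2) (hnull_u 0) hu0ne hw12
          obtain ⟨nn', hnv1, hnv2, hnv3, hnn'⟩ :=
            extendOrth (v 0) (v 1) (v 2) (hnull_v 0) hz1' hm12'
          have f0 : hermForm (u 0) nn = 0 := by rw [herm_conj nn (u 0), hnu1]; simp
          have f1 : hermForm (u 1) nn = 0 := by rw [herm_conj nn (u 1), hnu2]; simp
          have f2 : hermForm (u 2) nn = 0 := by rw [herm_conj nn (u 2), hnu3]; simp
          have g0 : hermForm (v 0) nn' = 0 := by rw [herm_conj nn' (v 0), hnv1]; simp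
          have g1 : hermForm (v 1) nn' = 0 := by rw [herm_conj nn' (v 1), hnv2]; simp
          have g2 : hermForm (v 2) nn' = 0 := by rw [herm_conj nn' (v 2), hnv3]; simp
          have hGram' : ∀ i j, hermForm (![u 0, u 1, u 2, nn] i) (![u 0, u 1, u 2, nn] j)
              = hermForm (![v 0, v 1, v 2, nn'] i) (![v 0, v 1, v 2, nn'] j) := by
            intro i j
            fin_cases i <;> fin_cases j
            · exact hGram 0 0
            · exact hGram 0 1
            · exact hGram 0 2
            · exact f0.trans g0.symm
            · exact hGram 1 0
            · exact hGram 1 1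
            · exact hGram 1 2
            · exact f1.trans g1.symm
            · exact hGram 2 0
            · exact hGram 2 1
            · exact hGram 2 2
            · exact f2.trans g2.symm
            · exact hnu1.trans hnv1.symm
            · exact hnu2.trans hnv2.symm
            · exact hnu3.trans hnv3.symm
            · exact hnn.trans hnn'.symm
          have hdet' : (colMat ![u 0, u 1, u 2, nn]).det ≠ 0 := by
            intro h0
            obtain ⟨mm, hmm0, hmmv⟩ := Matrix.exists_mulVec_eq_zero_iff.mpr h0
            rw [colMat_mulVec] at hmmv
            have hmm : mm 0 • u 0 + mm 1 • u 1 + mm 2 • u 2 + mm 3 • nn = 0 := hmmv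
            have h3 : mm 3 = 0 := by
              have hpn := congrArg (fun t => hermForm t nn) hmm
              rw [herm_comb4_left, f0, f1, f2, hnn, herm_zero_left] at hpn
              simpa using hpn
            rw [h3, zero_smul, add_zero] at hmm
            obtain ⟨h0', h1', h2'⟩ := hT3 _ _ _ hmm
            apply hmm0; funext i; fin_cases i <;> simp [h0', h1', h2', h3]
          obtain ⟨A0, hA0H, hA0m⟩ :=
            buildIso ![u 0, u 1, u 2, nn] ![v 0, v 1, v 2, nn'] hGram' hdet'
          refine ⟨A0, hA0H, ?_⟩
          intro j
          fin_cases j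
          · exact hA0m 0
          · exact hA0m 1
          · exact hA0m 2
          · show A0.mulVec (u 3) = v 3
            rw [hu3, hv3, Matrix.mulVec_add, Matrix.mulVec_add, Matrix.mulVec_smul,
              Matrix.mulVec_smul, Matrix.mulVec_smul,
              show A0.mulVec (u 0) = v 0 from hA0m 0,
              show A0.mulVec (u 1) = v 1 from hA0m 1,
              show A0.mulVec (u 2) = v 2 from hA0m 2]
        · obtain ⟨α, β, hu2⟩ := spanOf 2 hT3
          by_cases hT4 : ∀ a b c : ℂ, a • u 0 + b • u 1 + c • u 3 = 0 → a = 0 ∧ b = 0 ∧ c = 0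
          · -- triple (0,1,3) independent; leftover index 2
            have hdep2 : (![α, β, -1, 0] : Fin 4 → ℂ) 0 • u 0 + (![α, β, -1, 0] : Fin 4 → ℂ) 1 • u 1
                + (![α, β, -1, 0] : Fin 4 → ℂ) 2 • u 2 + (![α, β, -1, 0] : Fin 4 → ℂ) 3 • u 3 = 0 := by
              show α • u 0 + β • u 1 + (-1 : ℂ) • u 2 + (0 : ℂ) • u 3 = 0
              rw [hu2]; module
            have hdepv2 := dep_transfer u v hGram hnull_v hv0ne hm12' ![α, β, -1, 0] hdep2
            have hv2 : v 2 = α • v 0 + β • v 1 := by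
              funext i
              have h := congrFun hdepv2 i
              simp only [Pi.add_apply, Pi.smul_apply, smul_eq_mul, Pi.zero_apply,
                Matrix.cons_val_zero, Matrix.cons_val_one, Matrix.head_cons] at h ⊢
              rw [show (![α, β, -1, 0] : Fin 4 → ℂ) 2 = -1 from rfl,
                show (![α, β, -1, 0] : Fin 4 → ℂ) 3 = 0 from rfl] at h
              linear_combination -h
            obtain ⟨nn, hnu1, hnu2, hnu3, hnn⟩ :=
              extendOrth (u 0) (u 1) (u 3) (hnull_u 0) hu0ne hw12
            obtain ⟨nn', hnv1, hnv2, hnv3, hnn'⟩ :=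
              extendOrth (v 0) (v 1) (v 3) (hnull_v 0) hz1' hm12'
            have f0 : hermForm (u 0) nn = 0 := by rw [herm_conj nn (u 0), hnu1]; simp
            have f1 : hermForm (u 1) nn = 0 := by rw [herm_conj nn (u 1), hnu2]; simp
            have f2 : hermForm (u 3) nn = 0 := by rw [herm_conj nn (u 3), hnu3]; simp
            have g0 : hermForm (v 0) nn' = 0 := by rw [herm_conj nn' (v 0), hnv1]; simp
            have g1 : hermForm (v 1) nn' = 0 := by rw [herm_conj nn' (v 1), hnv2]; simp
            have g2 : hermForm (v 3) nn' = 0 := by rw [herm_conj nn' (v 3), hnv3]; simp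
            have hGram' : ∀ i j, hermForm (![u 0, u 1, u 3, nn] i) (![u 0, u 1, u 3, nn] j)
                = hermForm (![v 0, v 1, v 3, nn'] i) (![v 0, v 1, v 3, nn'] j) := by
              intro i j
              fin_cases i <;> fin_cases j
              · exact hGram 0 0
              · exact hGram 0 1
              · exact hGram 0 3
              · exact f0.trans g0.symm
              · exact hGram 1 0
              · exact hGram 1 1
              · exact hGram 1 3
              · exact f1.trans g1.symm
              · exact hGram 3 0
              · exact hGram 3 1
              · exact hGram 3 3
              · exact f2.trans g2.symm
              · exact hnu1.trans hnv1.symm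
              · exact hnu2.trans hnv2.symm
              · exact hnu3.trans hnv3.symm
              · exact hnn.trans hnn'.symm
            have hdet' : (colMat ![u 0, u 1, u 3, nn]).det ≠ 0 := by
              intro h0
              obtain ⟨mm, hmm0, hmmv⟩ := Matrix.exists_mulVec_eq_zero_iff.mpr h0
              rw [colMat_mulVec] at hmmv
              have hmm : mm 0 • u 0 + mm 1 • u 1 + mm 2 • u 3 + mm 3 • nn = 0 := hmmv
              have h3 : mm 3 = 0 := by
                have hpn := congrArg (fun t => hermForm t nn) hmm
                rw [herm_comb4_left, f0, f1, f2, hnn, herm_zero_left] at hpn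
                simpa using hpn
              rw [h3, zero_smul, add_zero] at hmm
              obtain ⟨h0', h1', h2'⟩ := hT4 _ _ _ hmm
              apply hmm0; funext i; fin_cases i <;> simp [h0', h1', h2', h3]
            obtain ⟨A0, hA0H, hA0m⟩ :=
              buildIso ![u 0, u 1, u 3, nn] ![v 0, v 1, v 3, nn'] hGram' hdet'
            refine ⟨A0, hA0H, ?_⟩
            intro j
            fin_cases j
            · exact hA0m 0
            · exact hA0m 1
            · show A0.mulVec (u 2) = v 2
              rw [hu2, hv2, Matrix.mulVec_add, Matrix.mulVec_smul, Matrix.mulVec_smul,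
                show A0.mulVec (u 0) = v 0 from hA0m 0,
                show A0.mulVec (u 1) = v 1 from hA0m 1]
            · exact hA0m 2
          · -- both triples dependent: contradiction with non-real cross-ratio
            exfalso
            obtain ⟨γ, δ, hu3s⟩ := spanOf 3 hT4
            have him := lemCoplanar (u 0) (u 1) (u 2) (u 3) (hnull_u 0) (hnull_u 1)
              (hnull_u 2) (hnull_u 3)
              (by rw [hGram 3 0]; exact m41) (by rw [hGram 2 1]; exact m32)
              ⟨α, β, hu2⟩ ⟨γ, δ, hu3s⟩
            have hcr : crossRatio (u 0) (u 1) (u 2) (u 3) = crossRatio z1 z2 z3 z4 := by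
              show crossRatio (l1 • z1) (l2 • z2) (l3 • z3) (l4 • z4) = _
              exact crossRatio_smul l1 l2 l3 l4 z1 z2 z3 z4 l1ne l2ne l3ne l4ne
            rw [hcr] at him
            exact hX1 him
      · exact buildIso u v hGram hdet
    obtain ⟨A0, hA0H, hA0map⟩ := hA
    obtain ⟨ω, hω0, hSU⟩ := toSU A0 hA0H
    refine ⟨ω • A0, hSU, ω * l1⁻¹, ω * l2⁻¹, ω * l3⁻¹, ω * l4⁻¹,
      mul_ne_zero hω0 (inv_ne_zero l1ne), mul_ne_zero hω0 (inv_ne_zero l2ne),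
      mul_ne_zero hω0 (inv_ne_zero l3ne), mul_ne_zero hω0 (inv_ne_zero l4ne),
      ?_, ?_, ?_, ?_⟩
    · have h0 : A0.mulVec (u 0) = v 0 := hA0map 0
      have hz : z1 = l1⁻¹ • (u 0) := by
        show z1 = l1⁻¹ • (l1 • z1)
        rw [smul_smul, inv_mul_cancel₀ l1ne, one_smul]
      rw [Matrix.smul_mulVec, hz, Matrix.mulVec_smul, h0]
      show ω • (l1⁻¹ • z1') = (ω * l1⁻¹) • z1'
      rw [smul_smul]
    · have h0 : A0.mulVec (u 1) = v 1 := hA0map 1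
      have hz : z2 = l2⁻¹ • (u 1) := by
        show z2 = l2⁻¹ • (l2 • z2)
        rw [smul_smul, inv_mul_cancel₀ l2ne, one_smul]
      rw [Matrix.smul_mulVec, hz, Matrix.mulVec_smul, h0]
      show ω • (l2⁻¹ • z2') = (ω * l2⁻¹) • z2'
      rw [smul_smul]
    · have h0 : A0.mulVec (u 2) = v 2 := hA0map 2
      have hz : z3 = l3⁻¹ • (u 2) := by
        show z3 = l3⁻¹ • (l3 • z3)
        rw [smul_smul, inv_mul_cancel₀ l3ne, one_smul]
      rw [Matrix.smul_mulVec, hz, Matrix.mulVec_smul, h0]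
      show ω • (l3⁻¹ • z3') = (ω * l3⁻¹) • z3'
      rw [smul_smul]
    · have h0 : A0.mulVec (u 3) = v 3 := hA0map 3
      have hz : z4 = l4⁻¹ • (u 3) := by
        show z4 = l4⁻¹ • (l4 • z4)
        rw [smul_smul, inv_mul_cancel₀ l4ne, one_smul]
      rw [Matrix.smul_mulVec, hz, Matrix.mulVec_smul, h0]
      show ω • (l4⁻¹ • z4') = (ω * l4⁻¹) • z4'
      rw [smul_smul]
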